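/- Let B be an axis-parallel box ∏_{i=1}^d [p_i, q_i] in ℝ^d with p = (p_1,…,p_d) and q = (q_1,…,q_d), and let D be a closed Euclidean ball containing both p and q. Then there exists a path from p to q along edges of B that is entirely contained in D; consequently D contains a d-dimensional simplex with vertices among the vertices of B whose volume is at least vol(B)/d!. -/

import Mathlib

open MeasureTheory

private lemma aux_prefix {d : ℕ} (g : Fin d → ℝ) (hg : ∀ k l : Fin d, k ≤ l → g k ≤ g l) (j : ℕ) :
    (∑ k : Fin d, if (k : ℕ) < j then g k else 0) ≤ max 0 (∑ k : Fin d, g k) := by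
  by_cases h : ∀ k : Fin d, (k : ℕ) < j → g k ≤ 0
  · refine le_max_of_le_left (Finset.sum_nonpos fun k _ => ?_)
    split
    · exact h k ‹_›
    · exact le_refl 0
  · push_neg at h
    obtain ⟨k0, hk0j, hk0⟩ := h
    refine le_max_of_le_right ?_
    have he : ∑ k : Fin d, g k = (∑ k : Fin d, if (k:ℕ) < j then g k else 0)
        + ∑ k : Fin d, (if (k:ℕ) < j then 0 else g k) := by
      rw [← Finset.sum_add_distrib]; apply Finset.sum_congr rfl; intros; split <;> ring
    have h2 : 0 ≤ ∑ k : Fin d, (if (k:ℕ) < j then 0 else g k) := by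
      apply Finset.sum_nonneg; intro k _
      split
      · exact le_refl 0
      · refine le_of_lt (lt_of_lt_of_le hk0 (hg k0 k ?_))
        have : j ≤ (k : ℕ) := by omega
        exact Fin.le_def.mpr (by omega)
    linarith

private lemma aux_tele (f : ℕ → ℝ) {a b : ℕ} (h : a ≤ b) :
    ∑ j ∈ Finset.Ico a b, (f j - f (j+1)) = f a - f b := by
  rw [Finset.sum_Ico_eq_sub _ h, Finset.sum_range_sub' f, Finset.sum_range_sub' f]
  ring

private def Simp (d : ℕ) (τ : Equiv.Perm (Fin d)) : Set (Fin d → ℝ) :=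
  {t | (∀ i, 0 ≤ t i ∧ t i ≤ 1) ∧ ∀ k l : Fin d, k ≤ l → t (τ l) ≤ t (τ k)}

private lemma simp_vol_eq (d : ℕ) (τ ρ : Equiv.Perm (Fin d)) :
    volume (Simp d τ) = volume (Simp d ρ) := by
  set e : Fin d ≃ Fin d := (τ.symm.trans ρ).symm with he
  have hmp := MeasureTheory.volume_measurePreserving_piCongrLeft (fun _ : Fin d => ℝ) e
  have hset : (MeasurableEquiv.piCongrLeft (fun _ : Fin d => ℝ) e) ⁻¹' (Simp d τ) = Simp d ρ := by
    ext t
    have happ : ∀ i : Fin d, (MeasurableEquiv.piCongrLeft (fun _ : Fin d => ℝ) e) t i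
        = t (e.symm i) := by
      intro i
      rw [MeasurableEquiv.coe_piCongrLeft]
      rw [Equiv.piCongrLeft_apply_eq_cast]
      rfl
    constructor
    · rintro ⟨h1, h2⟩
      refine ⟨fun i => by simpa [happ] using h1 (e i), fun k l hkl => ?_⟩
      have := h2 k l hkl
      rw [happ, happ] at this
      simpa [he] using this
    · rintro ⟨h1, h2⟩
      refine ⟨fun i => by simpa [happ] using h1 (e.symm i), fun k l hkl => ?_⟩
      rw [happ, happ]
      simpa [he] using h2 k l hkl
  have hmeas : MeasurableSet (Simp d τ) := by
    have : IsClosed (Simp d τ) := by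
      apply IsClosed.inter
      · show IsClosed {t : Fin d → ℝ | ∀ i, 0 ≤ t i ∧ t i ≤ 1}
        have : {t : Fin d → ℝ | ∀ i, 0 ≤ t i ∧ t i ≤ 1}
            = ⋂ i, {t : Fin d → ℝ | 0 ≤ t i ∧ t i ≤ 1} := by ext; simp
        rw [this]
        exact isClosed_iInter fun i =>
          (isClosed_le continuous_const (continuous_apply i)).inter
            (isClosed_le (continuous_apply i) continuous_const)
      · show IsClosed {t : Fin d → ℝ | ∀ k l : Fin d, k ≤ l → t (τ l) ≤ t (τ k)}
        have : {t : Fin d → ℝ | ∀ k l : Fin d, k ≤ l → t (τ l) ≤ t (τ k)}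
            = ⋂ k, ⋂ l, ⋂ (_ : k ≤ l), {t : Fin d → ℝ | t (τ l) ≤ t (τ k)} := by ext; simp
        rw [this]
        exact isClosed_iInter fun k => isClosed_iInter fun l => isClosed_iInter fun _ =>
          isClosed_le (continuous_apply _) (continuous_apply _)
    exact this.measurableSet
  calc volume (Simp d τ)
      = volume ((MeasurableEquiv.piCongrLeft (fun _ : Fin d => ℝ) e) ⁻¹' (Simp d τ)) :=
        (hmp.measure_preimage hmeas.nullMeasurableSet).symm
    _ = volume (Simp d ρ) := by rw [hset]

private lemma simp_vol_ge (d : ℕ) (ρ : Equiv.Perm (Fin d)) :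
    ((d.factorial : ENNReal))⁻¹ ≤ volume (Simp d ρ) := by
  have hcover : (Set.pi Set.univ fun _ : Fin d => Set.Icc (0:ℝ) 1)
      ⊆ ⋃ τ : Equiv.Perm (Fin d), Simp d τ := by
    intro t ht
    simp only [Set.mem_pi, Set.mem_univ, Set.mem_Icc, forall_true_left] at ht
    set τ₀ := Tuple.sort t with hτ₀
    have hmono : Monotone (t ∘ τ₀) := Tuple.monotone_sort t
    refine Set.mem_iUnion.mpr ⟨τ₀ * (Fin.revPerm : Equiv.Perm (Fin d)), ?_, ?_⟩
    · exact fun i => ⟨(ht i).1, (ht i).2⟩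
    · intro k l hkl
      exact hmono (Fin.rev_le_rev.mpr hkl)
  have hcube : volume (Set.pi Set.univ fun _ : Fin d => Set.Icc (0:ℝ) 1) = 1 := by
    rw [MeasureTheory.volume_pi_pi]
    simp [Real.volume_Icc]
  have h1 : (1 : ENNReal) ≤ ∑ τ : Equiv.Perm (Fin d), volume (Simp d τ) := by
    rw [← hcube]
    exact le_trans (measure_mono hcover) (measure_iUnion_fintype_le _ _)
  have h2 : ∑ τ : Equiv.Perm (Fin d), volume (Simp d τ)
      = (d.factorial : ENNReal) * volume (Simp d ρ) := by
    rw [Finset.sum_congr rfl fun τ _ => simp_vol_eq d τ ρ, Finset.sum_const,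
      Finset.card_univ, Fintype.card_perm, Fintype.card_fin, nsmul_eq_mul]
  have hne : (d.factorial : ENNReal) ≠ 0 := by
    exact_mod_cast Nat.cast_ne_zero.mpr d.factorial_ne_zero
  have htop : (d.factorial : ENNReal) ≠ ⊤ := ENNReal.natCast_ne_top _
  calc ((d.factorial : ENNReal))⁻¹ = (d.factorial : ENNReal)⁻¹ * 1 := (mul_one _).symm
    _ ≤ (d.factorial : ENNReal)⁻¹ * ((d.factorial : ENNReal) * volume (Simp d ρ)) := by
        rw [← h2]; exact mul_le_mul_right h1 _
    _ = volume (Simp d ρ) := by rw [← mul_assoc, ENNReal.inv_mul_cancel hne htop, one_mul]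

private lemma aux_mem_hull {d : ℕ} (p q : EuclideanSpace ℝ (Fin d)) (σ : Equiv.Perm (Fin d))
    (t : Fin d → ℝ) (h01 : ∀ i, 0 ≤ t i ∧ t i ≤ 1)
    (hanti : ∀ k l : Fin d, k ≤ l → t (σ l) ≤ t (σ k)) :
    (WithLp.toLp 2 (fun i => p i + (q i - p i) * t i) : EuclideanSpace ℝ (Fin d)) ∈
      convexHull ℝ (Set.range fun j : Fin (d+1) =>
        (WithLp.toLp 2 (fun i => if (σ.symm i : ℕ) < (j:ℕ) then q i else p i) : EuclideanSpace ℝ (Fin d))) := by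
  set ws : Fin (d+1) → EuclideanSpace ℝ (Fin d) := fun j =>
    (WithLp.toLp 2 (fun i => if (σ.symm i : ℕ) < (j:ℕ) then q i else p i) : EuclideanSpace ℝ (Fin d)) with hws
  set v : ℕ → ℝ := fun j => if h : j < d then t (σ ⟨j, h⟩) else 0 with hv
  set f : ℕ → ℝ := fun j => if j = 0 then 1 else v (j-1) with hf
  have hv0 : ∀ a, 0 ≤ v a := by
    intro a; rw [hv]; dsimp only; split
    · exact (h01 _).1
    · exact le_refl 0
  have hv1 : ∀ a, v a ≤ 1 := by
    intro a; rw [hv]; dsimp only; split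
    · exact (h01 _).2
    · exact zero_le_one
  have hv_anti : ∀ a b : ℕ, a ≤ b → v b ≤ v a := by
    intro a b hab; rw [hv]; dsimp only
    split
    · rename_i hb
      have ha : a < d := lt_of_le_of_lt hab hb
      rw [dif_pos ha]
      exact hanti ⟨a, ha⟩ ⟨b, hb⟩ (by exact Fin.mk_le_mk.mpr hab)
    · split
      · exact (h01 _).1
      · exact le_refl 0
  have hf_anti : ∀ a b : ℕ, a ≤ b → f b ≤ f a := by
    intro a b hab; rw [hf]; dsimp only
    by_cases ha : a = 0
    · rw [if_pos ha]; split
      · exact le_refl 1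
      · exact le_trans (hv1 _) (le_refl 1)
    · have hb : b ≠ 0 := by omega
      rw [if_neg ha, if_neg hb]
      exact hv_anti _ _ (by omega)
  have hfd : f (d+1) = 0 := by
    rw [hf]; dsimp only; rw [if_neg (Nat.succ_ne_zero d)]
    simp only [Nat.add_sub_cancel]
    rw [hv]; dsimp only; rw [dif_neg (lt_irrefl d)]
  have hf0 : f 0 = 1 := by simp [hf]
  set c : Fin (d+1) → ℝ := fun j => f (j:ℕ) - f ((j:ℕ)+1) with hc
  have hc0 : ∀ j, 0 ≤ c j := fun j => sub_nonneg.mpr (hf_anti _ _ (Nat.le_succ _))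
  have hcsum : ∑ j : Fin (d+1), c j = 1 := by
    rw [hc]
    rw [Fin.sum_univ_eq_sum_range (fun j => f j - f (j+1)) (d+1)]
    rw [Finset.sum_range_sub' f, hf0, hfd, sub_zero]
  have hcm : Finset.univ.centerMass c ws ∈ convexHull ℝ (Set.range ws) :=
    Finset.centerMass_mem_convexHull _ (fun j _ => hc0 j) (by rw [hcsum]; norm_num)
      (fun j _ => Set.mem_range_self j)
  rw [Finset.centerMass_eq_of_sum_1 _ _ hcsum] at hcm
  have hpt : (∑ j : Fin (d+1), c j • ws j)
      = (WithLp.toLp 2 (fun i => p i + (q i - p i) * t i) : EuclideanSpace ℝ (Fin d)) := by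
    ext i
    rw [WithLp.ofLp_sum, Finset.sum_apply]
    simp only [PiLp.smul_apply, smul_eq_mul]
    set m : ℕ := (σ.symm i : ℕ) with hm
    have hmd : m < d := (σ.symm i).isLt
    have hwsji : ∀ j : Fin (d+1), ws j i = if m < (j:ℕ) then q i else p i := fun j => rfl
    calc ∑ j : Fin (d+1), c j * ws j i
        = ∑ j ∈ Finset.range (d+1), (f j - f (j+1)) * (if m < j then q i else p i) := by
          rw [← Fin.sum_univ_eq_sum_range (fun j => (f j - f (j+1)) * (if m < j then q i else p i)) (d+1)]
      _ = (∑ j ∈ Finset.Ico 0 (m+1), (f j - f (j+1)) * (if m < j then q i else p i))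
          + ∑ j ∈ Finset.Ico (m+1) (d+1), (f j - f (j+1)) * (if m < j then q i else p i) := by
          rw [Finset.range_eq_Ico, ← Finset.sum_Ico_consecutive _ (Nat.zero_le (m+1)) (by omega)]
      _ = (∑ j ∈ Finset.Ico 0 (m+1), (f j - f (j+1))) * p i
          + (∑ j ∈ Finset.Ico (m+1) (d+1), (f j - f (j+1))) * q i := by
          rw [Finset.sum_mul, Finset.sum_mul]
          congr 1
          · refine Finset.sum_congr rfl fun j hj => ?_
            rw [Finset.mem_Ico] at hj
            rw [if_neg (by omega)]
          · refine Finset.sum_congr rfl fun j hj => ?_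
            rw [Finset.mem_Ico] at hj
            rw [if_pos (by omega)]
      _ = (f 0 - f (m+1)) * p i + (f (m+1) - f (d+1)) * q i := by
          rw [aux_tele f (Nat.zero_le (m+1)), aux_tele f (by omega : m+1 ≤ d+1)]
      _ = p i + (q i - p i) * t i := by
          have hfm : f (m+1) = t i := by
            rw [hf]; dsimp only; rw [if_neg (Nat.succ_ne_zero m)]
            simp only [Nat.add_sub_cancel]
            rw [hv]; dsimp only; rw [dif_pos hmd]
            have : (⟨m, hmd⟩ : Fin d) = σ.symm i := by ext; simp [hm]
            rw [this, Equiv.apply_symm_apply]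
          rw [hfm, hf0, hfd]
          ring
  rw [hpt] at hcm
  exact hcm

/-- Box-path-in-ball lemma: if a closed Euclidean ball `D` contains the two diametrical
corners `p` and `q` of the axis-parallel box `B = ∏ [p_i, q_i]`, then there is a path
from `p` to `q` along edges of `B` contained in `D`; consequently `D` contains a
`d`-simplex with vertices among the vertices of `B` of volume at least `vol(B)/d!`. -/
theorem stmt_11 (d : ℕ) (hd : 1 ≤ d) (p q c : EuclideanSpace ℝ (Fin d)) (r : ℝ)
    (hpq : ∀ i, p i ≤ q i)
    (hp : p ∈ Metric.closedBall c r) (hq : q ∈ Metric.closedBall c r) :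
    (∃ (k : ℕ) (w : ℕ → EuclideanSpace ℝ (Fin d)),
      w 0 = p ∧ w k = q ∧
      (∀ j ≤ k, ∀ i, w j i = p i ∨ w j i = q i) ∧
      (∀ j < k, (∃ i₀, ∀ i, i ≠ i₀ → w j i = w (j + 1) i) ∧
        segment ℝ (w j) (w (j + 1)) ⊆ Metric.closedBall c r)) ∧
    ∃ s : Fin (d + 1) → EuclideanSpace ℝ (Fin d),
      (∀ m i, s m i = p i ∨ s m i = q i) ∧
      convexHull ℝ (Set.range s) ⊆ Metric.closedBall c r ∧
      ENNReal.ofReal ((∏ i, (q i - p i)) / (Nat.factorial d)) ≤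
        volume (convexHull ℝ (Set.range s)) := by
  classical
  have hr0 : 0 ≤ r := le_trans dist_nonneg (Metric.mem_closedBall.mp hp)
  set δ : Fin d → ℝ := fun i => (q i - c i)^2 - (p i - c i)^2 with hδ
  set σ : Equiv.Perm (Fin d) := Tuple.sort δ with hσ
  have hg : ∀ k l : Fin d, k ≤ l → δ (σ k) ≤ δ (σ l) := fun k l h => Tuple.monotone_sort δ h
  set w : ℕ → EuclideanSpace ℝ (Fin d) := fun j =>
    (WithLp.toLp 2 (fun i => if (σ.symm i : ℕ) < j then q i else p i) : EuclideanSpace ℝ (Fin d)) with hw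
  have hdist : ∀ x : EuclideanSpace ℝ (Fin d), dist x c = Real.sqrt (∑ i, (x i - c i)^2) := by
    intro x
    rw [EuclideanSpace.dist_eq]
    congr 1
    exact Finset.sum_congr rfl fun i _ => by rw [Real.dist_eq, sq_abs]
  have hA : (∑ i, (p i - c i)^2) ≤ r^2 := by
    have h1 : Real.sqrt (∑ i, (p i - c i)^2) ≤ r := by
      rw [← hdist]; exact Metric.mem_closedBall.mp hp
    have h2 : (0:ℝ) ≤ ∑ i, (p i - c i)^2 := Finset.sum_nonneg fun i _ => sq_nonneg _
    calc (∑ i, (p i - c i)^2) = Real.sqrt (∑ i, (p i - c i)^2) ^ 2 := (Real.sq_sqrt h2).symm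
      _ ≤ r^2 := pow_le_pow_left₀ (Real.sqrt_nonneg _) h1 2
  have hB : (∑ i, (q i - c i)^2) ≤ r^2 := by
    have h1 : Real.sqrt (∑ i, (q i - c i)^2) ≤ r := by
      rw [← hdist]; exact Metric.mem_closedBall.mp hq
    have h2 : (0:ℝ) ≤ ∑ i, (q i - c i)^2 := Finset.sum_nonneg fun i _ => sq_nonneg _
    calc (∑ i, (q i - c i)^2) = Real.sqrt (∑ i, (q i - c i)^2) ^ 2 := (Real.sq_sqrt h2).symm
      _ ≤ r^2 := pow_le_pow_left₀ (Real.sqrt_nonneg _) h1 2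
  have hvert : ∀ j : ℕ, w j ∈ Metric.closedBall c r := by
    intro j
    have hsum : (∑ i, (w j i - c i)^2)
        = (∑ i, (p i - c i)^2) + ∑ k : Fin d, (if (k:ℕ) < j then δ (σ k) else 0) := by
      have h1 : (∑ i, (w j i - c i)^2) = ∑ k : Fin d, (w j (σ k) - c (σ k))^2 :=
        (Equiv.sum_comp σ fun i => (w j i - c i)^2).symm
      have h2 : (∑ i, (p i - c i)^2) = ∑ k : Fin d, (p (σ k) - c (σ k))^2 :=
        (Equiv.sum_comp σ fun i => (p i - c i)^2).symm
      rw [h1, h2, ← Finset.sum_add_distrib]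
      refine Finset.sum_congr rfl fun k _ => ?_
      have hwk : w j (σ k) = if (k:ℕ) < j then q (σ k) else p (σ k) := by
        rw [hw]; dsimp only; rw [Equiv.symm_apply_apply]
      rw [hwk]
      by_cases hkj : (k:ℕ) < j
      · rw [if_pos hkj, if_pos hkj]; simp only [hδ]; ring
      · rw [if_neg hkj, if_neg hkj]; ring
    have hpre := aux_prefix (fun k => δ (σ k)) hg j
    have hgs : (∑ k : Fin d, δ (σ k)) = (∑ i, (q i - c i)^2) - (∑ i, (p i - c i)^2) := by
      rw [Equiv.sum_comp σ δ]
      simp only [hδ]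
      exact Finset.sum_sub_distrib _ _
    have hfin : (∑ i, (w j i - c i)^2) ≤ r^2 := by
      rw [hgs] at hpre
      have hmax : max (0:ℝ) ((∑ i, (q i - c i)^2) - (∑ i, (p i - c i)^2))
          ≤ r^2 - (∑ i, (p i - c i)^2) := max_le (by linarith) (by linarith)
      rw [hsum]
      dsimp only at hpre
      linarith
    rw [Metric.mem_closedBall, hdist]
    calc Real.sqrt (∑ i, (w j i - c i)^2) ≤ Real.sqrt (r^2) := Real.sqrt_le_sqrt hfin
      _ = r := Real.sqrt_sq hr0
  have hw0 : w 0 = p := by ext i; simp [hw]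
  have hwd : w d = q := by ext i; simp [hw, (σ.symm i).isLt]
  have hvtx : ∀ j : ℕ, ∀ i, w j i = p i ∨ w j i = q i := by
    intro j i; rw [hw]; dsimp only; split
    · exact Or.inr rfl
    · exact Or.inl rfl
  constructor
  · refine ⟨d, w, hw0, hwd, fun j _ i => hvtx j i, fun j hj => ⟨⟨σ ⟨j, hj⟩, ?_⟩, ?_⟩⟩
    · intro i hi
      have hne : (σ.symm i : ℕ) ≠ j := by
        intro hEq
        apply hi
        have h3 : σ.symm i = ⟨j, hj⟩ := Fin.ext hEq
        rw [← h3, Equiv.apply_symm_apply]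
      rw [hw]; dsimp only
      by_cases hlt : (σ.symm i : ℕ) < j
      · rw [if_pos hlt, if_pos (by omega)]
      · rw [if_neg hlt, if_neg (by omega)]
    · exact (convex_closedBall c r).segment_subset (hvert j) (hvert (j+1))
  · refine ⟨fun j : Fin (d+1) => w (j:ℕ), fun m i => hvtx m i, ?_, ?_⟩
    · exact convexHull_min (Set.range_subset_iff.mpr fun j => hvert (j:ℕ))
        (convex_closedBall c r)
    · by_cases hstrict : ∀ i, p i < q i
      · set K := convexHull ℝ (Set.range fun j : Fin (d+1) => w (j:ℕ)) with hK
        have hKcompact : IsCompact K := (Set.finite_range _).isCompact_convexHull ℝ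
        have hKmeas : MeasurableSet K := hKcompact.isClosed.measurableSet
        set L : (Fin d → ℝ) →ₗ[ℝ] (Fin d → ℝ) :=
          Matrix.toLin' (Matrix.diagonal fun i => q i - p i) with hL
        have hdet : LinearMap.det L = ∏ i, (q i - p i) := by
          rw [hL, LinearMap.det_toLin', Matrix.det_diagonal]
        set pp : Fin d → ℝ := fun i => p i with hpp
        have hsub : (fun x => pp + x) '' (L '' (Simp d σ))
            ⊆ ((MeasurableEquiv.toLp 2 (Fin d → ℝ)) ⁻¹' K) := by
          rintro x ⟨y, ⟨t, ht, rfl⟩, rfl⟩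
          show (MeasurableEquiv.toLp 2 (Fin d → ℝ)) (pp + L t) ∈ K
          have hx : (MeasurableEquiv.toLp 2 (Fin d → ℝ)) (pp + L t)
              = (WithLp.toLp 2 (fun i => p i + (q i - p i) * t i) : EuclideanSpace ℝ (Fin d)) := by
            ext i
            have hz : ∀ z : Fin d → ℝ,
                ((MeasurableEquiv.toLp 2 (Fin d → ℝ)) z) i = z i := fun z => rfl
            rw [hz]
            show pp i + (L t) i = p i + (q i - p i) * t i
            rw [hL]
            dsimp only
            rw [Matrix.toLin'_apply, Matrix.mulVec_diagonal]
          rw [hx]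
          exact aux_mem_hull p q σ t ht.1 ht.2
        have hvol1 : volume ((fun x => pp + x) '' (L '' (Simp d σ)))
            = volume (L '' (Simp d σ)) := by
          rw [Set.image_add_left, measure_preimage_add]
        have hvol2 : volume (L '' (Simp d σ))
            = ENNReal.ofReal (∏ i, (q i - p i)) * volume (Simp d σ) := by
          rw [Measure.addHaar_image_linearMap, hdet,
            abs_of_nonneg (Finset.prod_nonneg fun i _ => by linarith [hpq i])]
        have hKvol : volume ((MeasurableEquiv.toLp 2 (Fin d → ℝ)) ⁻¹' K)
            = volume K :=
          (MeasurePreserving.symm _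
            (EuclideanSpace.volume_preserving_symm_measurableEquiv_toLp (Fin d))).measure_preimage
            hKmeas.nullMeasurableSet
        calc ENNReal.ofReal ((∏ i, (q i - p i)) / (Nat.factorial d))
            = ENNReal.ofReal (∏ i, (q i - p i)) * ((d.factorial : ENNReal))⁻¹ := by
              rw [ENNReal.ofReal_div_of_pos (by exact_mod_cast d.factorial_pos),
                div_eq_mul_inv, ENNReal.ofReal_natCast]
          _ ≤ ENNReal.ofReal (∏ i, (q i - p i)) * volume (Simp d σ) :=
              mul_le_mul_right (simp_vol_ge d σ) _
          _ = volume ((fun x => pp + x) '' (L '' (Simp d σ))) := by rw [hvol1, hvol2]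
          _ ≤ volume ((MeasurableEquiv.toLp 2 (Fin d → ℝ)) ⁻¹' K) :=
              measure_mono hsub
          _ = volume K := hKvol
      · push_neg at hstrict
        obtain ⟨i0, hi0⟩ := hstrict
        have hzero : (∏ i, (q i - p i)) = 0 :=
          Finset.prod_eq_zero (Finset.mem_univ i0) (by have := hpq i0; linarith)
        rw [hzero]
        simp
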